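/- Let H be an undirected graph on a finite vertex set V and let A, B, C ⊆ V be pairwise disjoint with A ⊥_g B | C in H. Then for every vertex γ ∈ V \ (A ∪ B ∪ C), either {γ} ⊥_g B | (A ∪ C) in H or A ⊥_g {γ} | (B ∪ C) in H. -/

import Mathlib

open Set

variable {V : Type*}

/-- There is a directed path (a sequence of ≥ 2 distinct vertices joined by
directed edges) from `v` to `w`; i.e. `v` is an ancestor of `w`. -/
def DirPathConn (E : V → V → Prop) (v w : V) : Prop :=
  ∃ l : List V, l.Chain' E ∧ l.Nodup ∧ 2 ≤ l.length ∧
    l.head? = some v ∧ l.getLast? = some w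

/-- `an(A)`: vertices outside `A` that are ancestors of some element of `A`. -/
def anSet (E : V → V → Prop) (A : Set V) : Set V :=
  {v | v ∉ A ∧ ∃ a ∈ A, DirPathConn E v a}

/-- `An(A) = A ∪ an(A)`, the smallest ancestral set containing `A`. -/
def AnSet (E : V → V → Prop) (A : Set V) : Set V := A ∪ anSet E A

/-- `pa(A)`: parents of `A` outside of `A`. -/
def paSet (E : V → V → Prop) (A : Set V) : Set V :=
  {v | v ∉ A ∧ ∃ a ∈ A, E v a}

/-- `cl(A) = A ∪ pa(A)`, the closure of `A`. -/
def clSet (E : V → V → Prop) (A : Set V) : Set V := A ∪ paSet E A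

/-- The induced subgraph `G_A` (as an edge relation on `V` supported on `A`). -/
def inducedGraph (E : V → V → Prop) (A : Set V) : V → V → Prop :=
  fun j k => E j k ∧ j ∈ A ∧ k ∈ A

/-- `G^B`: delete from `G` every directed edge starting in `B`. -/
def delOut (E : V → V → Prop) (B : Set V) : V → V → Prop :=
  fun j k => E j k ∧ j ∉ B

/-- The moral graph `G^m`: distinct `j, k` are adjacent iff they are joined by
an edge in some direction or have a common child. -/
def moralGraph (E : V → V → Prop) : V → V → Prop :=
  fun j k => j ≠ k ∧ (E j k ∨ E k j ∨ ∃ c, E j c ∧ E k c)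

/-- `l` is an undirected path from `v` to `w` in the undirected graph `H`:
a sequence of ≥ 2 distinct vertices, consecutive ones adjacent. -/
def IsUPath (H : V → V → Prop) (l : List V) (v w : V) : Prop :=
  l.Chain' H ∧ l.Nodup ∧ 2 ≤ l.length ∧
    l.head? = some v ∧ l.getLast? = some w

/-- `A ⊥_g B | C` in the undirected graph `H`: every path from a vertex of `A`
to a vertex of `B` contains a vertex of `C`. -/
def uSep (H : V → V → Prop) (A B C : Set V) : Prop :=
  ∀ v ∈ A, ∀ w ∈ B, ∀ l : List V, IsUPath H l v w → ∃ c ∈ C, c ∈ l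

/-- δ-separation for pairwise disjoint `A, B, C`: `A ⊥_g B | C` in the moral
graph of the subgraph of `G^B` induced by `An(A ∪ B ∪ C)`. -/
def deltaSepDisjoint (E : V → V → Prop) (A B C : Set V) : Prop :=
  uSep (moralGraph (inducedGraph (delOut E B) (AnSet E (A ∪ B ∪ C)))) A B C

/-- δ-separation `A ir_δ B | C` for general (not necessarily disjoint) sets:
`C \ B` δ-separates `A \ (B ∪ C)` from `B`. -/
def deltaSep (E : V → V → Prop) (A B C : Set V) : Prop :=
  deltaSepDisjoint E (A \ (B ∪ C)) B (C \ B)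


theorem walk_of_list (G : SimpleGraph V) :
    ∀ (l : List V) (v w : V), l.Chain' G.Adj → l.head? = some v →
      l.getLast? = some w → ∃ p : G.Walk v w, p.support = l
  | [], v, w, _, hv, _ => by simp at hv
  | [x], v, w, _, hv, hw => by
      simp only [List.head?_cons, Option.some.injEq] at hv
      simp only [List.getLast?_singleton, Option.some.injEq] at hw
      subst hv; subst hw
      exact ⟨SimpleGraph.Walk.nil, rfl⟩
  | x :: y :: l, v, w, hc, hv, hw => by
      simp only [List.head?_cons, Option.some.injEq] at hv
      subst hv
      obtain ⟨hadj, hc'⟩ := List.isChain_cons_cons.mp hc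
      have hw' : (y :: l).getLast? = some w := by
        rwa [List.getLast?_cons_cons] at hw
      obtain ⟨p, hp⟩ := walk_of_list G (y :: l) y w hc' rfl hw'
      exact ⟨SimpleGraph.Walk.cons hadj p, by simp [hp]⟩

theorem getLast?_support {G : SimpleGraph V} {a b : V} (p : G.Walk a b) :
    p.support.getLast? = some b := by
  rw [List.getLast?_eq_getLast (SimpleGraph.Walk.support_ne_nil p),
    SimpleGraph.Walk.getLast_support]

/-- In an undirected graph, if `C` separates `A` from `B` then any vertex `γ`
outside `A ∪ B ∪ C` is separated from `B` by `A ∪ C` or from `A` by `B ∪ C`. -/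
theorem uSep_vertex_dichotomy [Fintype V] (H : V → V → Prop)
    (hSymm : ∀ j k, H j k → H k j) (hIrr : ∀ j, ¬ H j j)
    (A B C : Set V)
    (hAB : Disjoint A B) (hAC : Disjoint A C) (hBC : Disjoint B C)
    (h : uSep H A B C) (γ : V) (hγ : γ ∈ Set.univ \ (A ∪ B ∪ C)) :
    uSep H {γ} B (A ∪ C) ∨ uSep H A {γ} (B ∪ C) := by
  classical
  by_contra hcon
  push_neg at hcon
  obtain ⟨h1, h2⟩ := hcon
  simp only [uSep, not_forall] at h1 h2
  obtain ⟨g, hg, b, hb, l1, hl1, hl1c⟩ := h1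
  obtain ⟨a, ha, g', hg', l2, hl2, hl2c⟩ := h2
  rw [Set.mem_singleton_iff] at hg; subst g
  rw [Set.mem_singleton_iff] at hg'; subst g'
  push_neg at hl1c hl2c
  set G : SimpleGraph V := ⟨H, ⟨hSymm⟩, ⟨hIrr⟩⟩ with hG
  obtain ⟨hc1, hn1, hlen1, hh1, hlast1⟩ := hl1
  obtain ⟨hc2, hn2, hlen2, hh2, hlast2⟩ := hl2
  obtain ⟨p1, hp1⟩ := walk_of_list G l1 γ b hc1 hh1 hlast1
  obtain ⟨p2, hp2⟩ := walk_of_list G l2 a γ hc2 hh2 hlast2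
  set q := (p2.append p1).toPath with hq
  have hab : a ≠ b := by
    intro hEq
    exact (Set.disjoint_left.mp hAB ha) (hEq ▸ hb)
  have hqsupp : ∀ x ∈ q.1.support, x ∈ l2 ∨ x ∈ l1 := by
    intro x hx
    have := SimpleGraph.Walk.support_toPath_subset _ hx
    rw [SimpleGraph.Walk.mem_support_append_iff] at this
    rcases this with h | h
    · exact Or.inl (hp2 ▸ h)
    · exact Or.inr (hp1 ▸ h)
  have hpath : IsUPath H q.1.support a b := by
    refine ⟨(SimpleGraph.Walk.isChain_adj_support (G := G) _ :), q.2.support_nodup, ?_, ?_, getLast?_support _⟩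
    · rcases hs : q.1.support with _ | ⟨x, _ | ⟨y, t⟩⟩
      · exact absurd hs (SimpleGraph.Walk.support_ne_nil _)
      · exfalso
        have h1 : q.1.support.head? = some a := by
          rw [SimpleGraph.Walk.support_eq_cons]; rfl
        have h2 : q.1.support.getLast? = some b := getLast?_support _
        rw [hs] at h1 h2
        simp at h1 h2
        exact hab (h1.symm.trans h2)
      · simp
    · rw [SimpleGraph.Walk.support_eq_cons]; rfl
  obtain ⟨c, hc, hcmem⟩ := h a ha b hb q.1.support hpath
  rcases hqsupp c hcmem with h | h
  · exact hl2c c (Or.inr hc) h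
  · exact hl1c c (Or.inr hc) h
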